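/- Let p be a prime and α = (α_1, ..., α_r) a partition of d. Then v_p(τ_{d-1}) + 1 = v_p(∏_{i=1}^r (α_i + 1)!) if and only if every part α_i is of the form p^{k_i} - 1 for some positive integer k_i. -/

import Mathlib

/-- The `n`-th Todd number `τ_n = ∏_{p prime} p^{⌊n/(p-1)⌋}`. -/
def toddNumber (n : ℕ) : ℕ :=
  ∏ p ∈ (Finset.range (n + 2)).filter Nat.Prime, p ^ (n / (p - 1))

lemma ofDigits_eq_zero_of_sum_eq_zero (p : ℕ) : ∀ L : List ℕ, L.sum = 0 → Nat.ofDigits p L = 0 := by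
  intro L
  induction L with
  | nil => simp
  | cons a t ih =>
    intro h
    simp only [List.sum_cons] at h
    have ha : a = 0 := by omega
    have ht : t.sum = 0 := by omega
    simp [Nat.ofDigits_cons, ha, ih ht]

lemma ofDigits_pow_of_sum_eq_one (p : ℕ) :
    ∀ L : List ℕ, L.sum = 1 → ∃ i, Nat.ofDigits p L = p ^ i := by
  intro L
  induction L with
  | nil => simp
  | cons a t ih =>
    intro h
    simp only [List.sum_cons] at h
    rcases Nat.eq_zero_or_pos a with ha | ha
    · obtain ⟨i, hi⟩ := ih (by omega)
      exact ⟨i + 1, by simp [Nat.ofDigits_cons, ha, hi, pow_succ]; ring⟩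
    · have ha1 : a = 1 := by omega
      have ht : t.sum = 0 := by omega
      exact ⟨0, by simp [Nat.ofDigits_cons, ha1, ofDigits_eq_zero_of_sum_eq_zero p t ht]⟩

lemma digits_sum_pos (p n : ℕ) (hn : 0 < n) : 0 < (p.digits n).sum := by
  rcases Nat.eq_zero_or_pos (p.digits n).sum with h | h
  · have := ofDigits_eq_zero_of_sum_eq_zero p _ h
    rw [Nat.ofDigits_digits] at this
    omega
  · exact h

lemma digits_sum_eq_one_iff (p n : ℕ) (hp : 1 < p) (hn : 0 < n) :
    (p.digits n).sum = 1 ↔ ∃ k, n = p ^ k := by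
  constructor
  · intro h
    obtain ⟨i, hi⟩ := ofDigits_pow_of_sum_eq_one p _ h
    rw [Nat.ofDigits_digits] at hi
    exact ⟨i, hi⟩
  · rintro ⟨k, rfl⟩
    have : p.digits (p ^ k) = List.replicate k 0 ++ p.digits 1 := by
      have := Nat.digits_base_pow_mul (b := p) (k := k) (m := 1) hp one_pos
      simpa using this
    have h1 : p.digits 1 = [1] := by
      rw [Nat.digits_def' hp one_pos, Nat.mod_eq_of_lt hp, Nat.div_eq_of_lt hp]
      simp
    simp [this, h1]

lemma key_sum (p : ℕ) [Fact p.Prime] (α : List ℕ) :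
    (p - 1) * padicValNat p ((α.map fun a => Nat.factorial (a + 1)).prod)
      + (α.map fun a => (p.digits (a + 1)).sum).sum = (α.map fun a => a + 1).sum := by
  induction α with
  | nil => simp
  | cons a t ih =>
    have h1 : Nat.factorial (a + 1) ≠ 0 := (Nat.factorial_pos _).ne'
    have h2 : ((t.map fun a => Nat.factorial (a + 1)).prod) ≠ 0 := by
      apply ne_of_gt
      apply List.prod_pos
      intro x hx
      simp only [List.mem_map] at hx
      obtain ⟨y, _, rfl⟩ := hx
      exact Nat.factorial_pos _
    simp only [List.map_cons, List.prod_cons, List.sum_cons]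
    rw [padicValNat.mul h1 h2, Nat.mul_add]
    have legendre := sub_one_mul_padicValNat_factorial (p := p) (a + 1)
    have hle := Nat.digit_sum_le p (a + 1)
    omega

lemma padicValNat_toddNumber (p n : ℕ) (hp : p.Prime) :
    padicValNat p (toddNumber n) = n / (p - 1) := by
  have hT : toddNumber n ≠ 0 := by
    apply ne_of_gt
    apply Finset.prod_pos
    intro q hq
    simp only [Finset.mem_filter] at hq
    exact pow_pos hq.2.pos _
  have : (toddNumber n).factorization p = n / (p - 1) := by
    rw [toddNumber, Nat.factorization_prod (fun q hq => by
      simp only [Finset.mem_filter] at hq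
      exact (pow_pos hq.2.pos _).ne')]
    rw [Finset.sum_apply']
    have hterm : ∀ q ∈ (Finset.range (n + 2)).filter Nat.Prime,
        (q ^ (n / (q - 1))).factorization p = if q = p then n / (p - 1) else 0 := by
      intro q hq
      simp only [Finset.mem_filter] at hq
      rw [hq.2.factorization_pow, Finsupp.single_apply]
      split_ifs with h
      · rw [h]
      · rfl
    rw [Finset.sum_congr rfl hterm, Finset.sum_ite_eq' _ p]
    split_ifs with h
    · rfl
    · simp only [Finset.mem_filter, Finset.mem_range, not_and] at h
      have : n + 2 ≤ p := by
        by_contra hc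
        exact (h (by omega)) hp
      have : n < p - 1 := by omega
      rw [Nat.div_eq_of_lt this]
  rw [← this, Nat.factorization_def _ hp]

lemma list_all_one_of_sum_eq_length : ∀ (L : List ℕ), (∀ x ∈ L, 1 ≤ x) → L.sum = L.length →
    ∀ x ∈ L, x = 1 := by
  intro L
  induction L with
  | nil => simp
  | cons a t ih =>
    intro hpos hsum x hx
    simp only [List.sum_cons, List.length_cons] at hsum
    have ha : 1 ≤ a := hpos a List.mem_cons_self
    have htge : t.length ≤ t.sum := by
      have h := List.sum_le_sum (l := t) (f := fun _ => 1) (g := id)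
        (fun x hx => hpos x (List.mem_cons_of_mem a hx))
      simpa using h
    have ha1 : a = 1 := by omega
    have htsum : t.sum = t.length := by omega
    rcases List.mem_cons.mp hx with rfl | hx
    · exact ha1
    · exact ih (fun y hy => hpos y (List.mem_cons_of_mem a hy)) htsum x hx

/-- For a prime `p` and a partition `α` of `d`, the equality
`v_p(τ_{d-1}) + 1 = v_p(∏_i (α_i + 1)!)` holds if and only if every part `α_i`
is of the form `p^{k_i} - 1` for some positive integer `k_i`. -/
theorem padicValNat_partition_factorial_eq_iff (p d : ℕ) (hp : p.Prime) (hd : 0 < d)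
    (α : List ℕ) (hpos : ∀ a ∈ α, 0 < a) (hsum : α.sum = d) :
    padicValNat p (toddNumber (d - 1)) + 1 =
        padicValNat p ((α.map fun a => Nat.factorial (a + 1)).prod) ↔
      ∀ a ∈ α, ∃ k : ℕ, 1 ≤ k ∧ a = p ^ k - 1 := by
  haveI : Fact p.Prime := ⟨hp⟩
  have hp2 : 2 ≤ p := hp.two_le
  set V := padicValNat p ((α.map fun a => Nat.factorial (a + 1)).prod) with hV
  set S := (α.map fun a => (p.digits (a + 1)).sum).sum with hS
  set r := α.length with hr
  have hmapsum : (α.map fun a => a + 1).sum = d + r := by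
    rw [← hsum, hr]
    induction α with
    | nil => simp
    | cons a t iht => simp_all; omega
  have hkey : (p - 1) * V + S = d + r := by
    rw [hV, hS, key_sum p α, hmapsum]
  have hSr : r ≤ S := by
    rw [hS, hr]
    calc α.length = (α.map fun a => 1).sum := by simp
    _ ≤ _ := by
        apply List.sum_le_sum
        intro a ha
        exact digits_sum_pos p (a + 1) (by omega)
  rw [padicValNat_toddNumber p (d - 1) hp]
  constructor
  · intro heq
    -- derive d ≤ (p-1) * V
    have hdle : d ≤ (p - 1) * V := by
      have hdm := Nat.div_add_mod (d - 1) (p - 1)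
      have hmlt : (d - 1) % (p - 1) < p - 1 := Nat.mod_lt _ (by omega)
      have hmul : (p - 1) * V = (p - 1) * ((d - 1) / (p - 1)) + (p - 1) := by
        rw [← heq]; ring
      omega
    have hSler : S ≤ r := by omega
    have hSeq : S = r := le_antisymm hSler hSr
    -- all digit sums equal 1
    have hall : ∀ x ∈ α.map fun a => (p.digits (a + 1)).sum, x = 1 := by
      apply list_all_one_of_sum_eq_length
      · intro x hx
        simp only [List.mem_map] at hx
        obtain ⟨a, ha, rfl⟩ := hx
        exact digits_sum_pos p (a + 1) (by omega)
      · rw [← hS, hSeq, hr, List.length_map]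
    intro a ha
    have h1 : (p.digits (a + 1)).sum = 1 :=
      hall _ (List.mem_map.mpr ⟨a, ha, rfl⟩)
    obtain ⟨k, hk⟩ := (digits_sum_eq_one_iff p (a + 1) (by omega) (by omega)).mp h1
    refine ⟨k, ?_, by omega⟩
    by_contra hk0
    have : k = 0 := by omega
    rw [this, pow_zero] at hk
    have := hpos a ha
    omega
  · intro hall
    -- S = r
    have hSeq : S = r := by
      rw [hS, hr]
      have : ∀ a ∈ α, (p.digits (a + 1)).sum = 1 := by
        intro a ha
        obtain ⟨k, hk1, hk2⟩ := hall a ha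
        apply (digits_sum_eq_one_iff p (a + 1) (by omega) (by omega)).mpr
        refine ⟨k, ?_⟩
        have : 1 ≤ p ^ k := Nat.one_le_pow _ _ (by omega)
        omega
      calc (α.map fun a => (p.digits (a + 1)).sum).sum
          = (α.map fun _ => 1).sum := by rw [List.map_congr_left this]
      _ = α.length := by simp
    have hpV : (p - 1) * V = d := by omega
    have hV1 : 1 ≤ V := by
      rcases Nat.eq_zero_or_pos V with h | h
      · rw [h, Nat.mul_zero] at hpV; omega
      · exact h
    -- (d-1)/(p-1) = V - 1
    have hdiv : (d - 1) / (p - 1) = V - 1 := by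
      obtain ⟨W, hW⟩ : ∃ W, V = 1 + W := ⟨V - 1, by omega⟩
      rw [hW]
      rw [hW, Nat.mul_add, Nat.mul_one] at hpV
      have hd1 : d - 1 = (p - 2) + (p - 1) * W := by omega
      have h2 : 1 + W - 1 = W := by omega
      rw [hd1, h2, Nat.add_mul_div_left _ _ (show 0 < p - 1 by omega),
        Nat.div_eq_of_lt (by omega)]
      omega
    omega
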